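/- Let x ∈ F₂ⁿ with Hamming weight ω_H(x) > 2, and let D_n(x) = {0, x} ∪ {e_i : i ∈ Fin n}. Then D_n(x) is not equal to B_d(0,r) for any TS-metric d on F₂ⁿ and any r > 0. -/
import Mathlib


open Set Function

/-- A weight on a binary vector space `ι → ZMod 2`. -/
def IsWeight {ι : Type*} (ω : (ι → ZMod 2) → ℝ) : Prop :=
  (∀ x, 0 ≤ ω x) ∧ (∀ x, ω x = 0 ↔ x = 0) ∧ ∀ x y, ω (x + y) ≤ ω x + ω y

/-- A function respects the support of vectors. -/
def RespectsSupport {ι : Type*} (ω : (ι → ZMod 2) → ℝ) : Prop :=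
  ∀ x y : ι → ZMod 2, Function.support x ⊆ Function.support y → ω x ≤ ω y

/-- A TS-metric: a (translation-invariant) metric determined by a weight
that respects support, i.e. `d x y = ω (x + y)` (note `-y = y` in char 2). -/
def IsTSMetric {ι : Type*} (d : (ι → ZMod 2) → (ι → ZMod 2) → ℝ) : Prop :=
  ∃ ω, IsWeight ω ∧ RespectsSupport ω ∧ ∀ x y, d x y = ω (x + y)

/-- The ball `B_d(x, r)`. -/
def tsBall {ι : Type*} (d : (ι → ZMod 2) → (ι → ZMod 2) → ℝ) (x : ι → ZMod 2) (r : ℝ) :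
    Set (ι → ZMod 2) := {y | d x y ≤ r}

/-- `(D, C)` is a tiling: the translates `c + D`, `c ∈ C`, are pairwise disjoint
and cover the whole space. -/
def IsTiling {ι : Type*} (D C : Set (ι → ZMod 2)) : Prop :=
  (⋃ c ∈ C, (c + ·) '' D) = Set.univ ∧
  C.Pairwise fun c c' => Disjoint ((c + ·) '' D) ((c' + ·) '' D)

/-- `C` is a `(d, r)`-perfect code: the balls of radius `r` centered at codewords
are pairwise disjoint and cover the whole space. -/
def IsPerfectCode {ι : Type*} (d : (ι → ZMod 2) → (ι → ZMod 2) → ℝ) (r : ℝ)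
    (C : Set (ι → ZMod 2)) : Prop :=
  (⋃ c ∈ C, tsBall d c r) = Set.univ ∧
  C.Pairwise fun c c' => Disjoint (tsBall d c r) (tsBall d c' r)

/-- A polyhedromino: any two points of `D` are joined by a geodesic path
(w.r.t. the Hamming distance) lying inside `D`. -/
def IsPolyhedromino {ι : Type*} [Fintype ι] (D : Set (ι → ZMod 2)) : Prop :=
  ∀ x ∈ D, ∀ y ∈ D, ∃ γ : ℕ → (ι → ZMod 2),
    γ 0 = x ∧ γ (hammingDist x y) = y ∧
    (∀ i ≤ hammingDist x y, γ i ∈ D) ∧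
    ∀ i < hammingDist x y, hammingDist (γ i) (γ (i + 1)) = 1

/-- A poly-tiling: a tiling whose tile is a polyhedromino. -/
def IsPolyTiling {ι : Type*} [Fintype ι] (D C : Set (ι → ZMod 2)) : Prop :=
  IsTiling D C ∧ IsPolyhedromino D

/-- The vector `e_i` with support `{i}`. -/
def unitVec {ι : Type*} [DecidableEq ι] (i : ι) : ι → ZMod 2 := Pi.single i 1

/-- The `F`-combinatorial weight: the minimal number of members of `F` needed
to cover the support of `x`. -/
noncomputable def combWeight {ι : Type*} [DecidableEq ι] (F : Finset (Finset ι))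
    (x : ι → ZMod 2) : ℕ :=
  sInf {k | ∃ A : Finset (Finset ι), A ⊆ F ∧ A.card = k ∧ Function.support x ⊆ ↑(A.sup id)}

/-- The axioms of a metric. -/
def IsMetric {α : Type*} (d : α → α → ℝ) : Prop :=
  (∀ x y, d x y = 0 ↔ x = y) ∧ (∀ x y, d x y = d y x) ∧ ∀ x y z, d x z ≤ d x y + d y z

/-- The max-metric on the product (concatenation) space, identified with
functions on `Fin n ⊕ Fin m`. -/
def dmax {n m : ℕ} (d₁ : (Fin n → ZMod 2) → (Fin n → ZMod 2) → ℝ)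
    (d₂ : (Fin m → ZMod 2) → (Fin m → ZMod 2) → ℝ)
    (w w' : Fin n ⊕ Fin m → ZMod 2) : ℝ :=
  max (d₁ (fun i => w (Sum.inl i)) (fun i => w' (Sum.inl i)))
      (d₂ (fun j => w (Sum.inr j)) (fun j => w' (Sum.inr j)))

/-- if `ω_H(x) > 2`, then `D_n(x) = {0, x} ∪ {e_i : i}` is not a
TS-ball centered at `0`. -/
theorem stmt_11 {n : ℕ} (x : Fin n → ZMod 2) (hx : 2 < hammingNorm x)
    (d : (Fin n → ZMod 2) → (Fin n → ZMod 2) → ℝ) (r : ℝ)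
    (hd : IsTSMetric d) (hr : 0 < r) :
    tsBall d 0 r ≠ {0, x} ∪ Set.range (fun i : Fin n => unitVec i) := by
  intro hEq
  obtain ⟨ω, ⟨hpos, hzero, htri⟩, hresp, hdw⟩ := hd
  -- support of x as a finset
  have hx' : 2 < (Finset.univ.filter fun i => x i ≠ 0).card := by
    simpa [hammingNorm, hammingDist] using hx
  obtain ⟨i, j, k, hi, hj, hk, hij, hik, hjk⟩ := Finset.two_lt_card_iff.mp hx'
  simp only [Finset.mem_filter] at hi hj hk
  set y : Fin n → ZMod 2 := unitVec i + unitVec j with hy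
  have hyi : y i = 1 := by
    simp [hy, unitVec, Pi.single_apply, hij]
  have hyj : y j = 1 := by
    simp [hy, unitVec, Pi.single_apply, hij, Ne.symm hij]
  have hyk : y k = 0 := by
    simp [hy, unitVec, Pi.single_apply, Ne.symm hik, Ne.symm hjk]
  -- support y ⊆ support x
  have hsupp : Function.support y ⊆ Function.support x := by
    intro l hl
    simp only [Function.mem_support, hy, unitVec, Pi.add_apply, Pi.single_apply] at hl
    by_cases hli : l = i
    · subst hli; exact hi.2
    · by_cases hlj : l = j
      · subst hlj; exact hj.2
      · simp [hli, hlj] at hl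
  -- x is in the ball
  have hxball : x ∈ tsBall d 0 r := by
    rw [hEq]; left; right; rfl
  have hωx : ω x ≤ r := by
    have := hxball
    simpa [tsBall, hdw] using this
  have hyball : y ∈ tsBall d 0 r := by
    simp only [tsBall, Set.mem_setOf_eq, hdw, zero_add]
    exact le_trans (hresp y x hsupp) hωx
  rw [hEq] at hyball
  rcases hyball with (h0 | hxy) | ⟨l, hl⟩
  · have : y i = 0 := by rw [h0]; rfl
    rw [hyi] at this; exact one_ne_zero this
  · have : y k = x k := by rw [hxy]
    rw [hyk] at this; exact hk.2 this.symm
  · simp only at hl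
    have h1 : unitVec l i = (1 : ZMod 2) := by rw [hl]; exact hyi
    have h2 : unitVec l j = (1 : ZMod 2) := by rw [hl]; exact hyj
    have hli : l = i := by
      by_contra h; simp [unitVec, Pi.single_apply, h] at h1
    have hlj : l = j := by
      by_contra h; simp [unitVec, Pi.single_apply, h] at h2
    exact hij (hli ▸ hlj)
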